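/- Let (g,N) be a Nijenhuis Leibniz algebra over a field of characteristic 0 and let (V,l,r,N_V) be a representation of (g,N). Define l'(x,u) := l(N(x),u) − N_V(l(x,u)) + l(x,N_V(u)) and r'(u,x) := r(u,N(x)) − N_V(r(u,x)) + r(N_V(u),x) for x ∈ g, u ∈ V, and define [x,y]_* := [N(x),y] + [x,N(y)] − N([x,y]). Then (V,l',r',N_V) is a representation of the Nijenhuis Leibniz algebra (g,[·,·]_*,N); that is: (i) l'(x,l'(y,u)) = l'([x,y]_*,u) + l'(y,l'(x,u)), (ii) l'(x,r'(u,y)) = r'(l'(x,u),y) + r'(u,[x,y]_*), (iii) r'(u,[x,y]_*) = r'(r'(u,x),y) + l'(x,r'(u,y)), (iv) l'(N(x),N_V(u)) = N_V(l'(N(x),u) + l'(x,N_V(u)) − N_V(l'(x,u))), and (v) r'(N_V(u),N(x)) = N_V(r'(N_V(u),x) + r'(u,N(x)) − N_V(r'(u,x))), for all x,y ∈ g and u ∈ V. -/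

import Mathlib

section

variable {K : Type*} [Field K] {g V : Type*} [AddCommGroup g] [Module K g]
  [AddCommGroup V] [Module K V]

/-- The deformed bracket `[x,y]_* = [N x, y] + [x, N y] - N [x, y]`. -/
def starBracket (br : g →ₗ[K] g →ₗ[K] g) (N : g →ₗ[K] g) (x y : g) : g :=
  br (N x) y + br x (N y) - N (br x y)

/-- The deformed left action `l'(x,u) = l(N x, u) - N_V(l(x,u)) + l(x, N_V u)`. -/
def lStar (l : g →ₗ[K] V →ₗ[K] V) (N : g →ₗ[K] g) (Nv : V →ₗ[K] V)
    (x : g) (u : V) : V :=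
  l (N x) u - Nv (l x u) + l x (Nv u)

/-- The deformed right action `r'(u,x) = r(u, N x) - N_V(r(u,x)) + r(N_V u, x)`. -/
def rStar (r : V →ₗ[K] g →ₗ[K] V) (N : g →ₗ[K] g) (Nv : V →ₗ[K] V)
    (u : V) (x : g) : V :=
  r u (N x) - Nv (r u x) + r (Nv u) x

end

section AuxGeneric

variable {M : Type*} [AddCommGroup M]

/-- Auxiliary: the deformed bracket for a plain bilinear bracket. -/
def sBf (B : M → M → M) (N : M → M) (a b : M) : M :=
  B (N a) b + B a (N b) - N (B a b)

/-- Auxiliary: the deformed bracket of a Nijenhuis Leibniz bracket is Leibniz. -/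
theorem lemA (B : M → M → M) (N : M → M)
    (addl : ∀ a b c, B (a + b) c = B a c + B b c)
    (addr : ∀ a b c, B a (b + c) = B a b + B a c)
    (subl : ∀ a b c, B (a - b) c = B a c - B b c)
    (subr : ∀ a b c, B a (b - c) = B a b - B a c)
    (Nadd : ∀ a b, N (a + b) = N a + N b)
    (Nsub : ∀ a b, N (a - b) = N a - N b)
    (leib : ∀ a b c, B a (B b c) = B (B a b) c + B b (B a c))
    (nij : ∀ a b, B (N a) (N b) = N (B (N a) b + B a (N b) - N (B a b)))
    (x y z : M) :
    sBf B N x (sBf B N y z) = sBf B N (sBf B N x y) z + sBf B N y (sBf B N x z) := by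
  simp only [sBf]
  rw [← nij y z, ← nij x y, ← nij x z]
  simp only [addl, addr, subl, subr, Nadd, Nsub]
  rw [nij x (B y z), nij (B x y) z, nij y (B x z),
      leib (N x) (N y) z, leib (N x) y (N z), leib x (N y) (N z),
      leib x (N y) z, leib x y (N z), leib (N x) y z, leib x y z]
  simp only [addl, addr, subl, subr, Nadd, Nsub]
  abel

/-- Auxiliary: `N` is Nijenhuis for the deformed bracket. -/
theorem lemB (B : M → M → M) (N : M → M)
    (Nadd : ∀ a b, N (a + b) = N a + N b)
    (Nsub : ∀ a b, N (a - b) = N a - N b)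
    (nij : ∀ a b, B (N a) (N b) = N (B (N a) b + B a (N b) - N (B a b)))
    (x y : M) :
    sBf B N (N x) (N y) =
      N (sBf B N (N x) y + sBf B N x (N y) - N (sBf B N x y)) := by
  simp only [sBf]
  rw [← nij x y, nij (N x) y, nij x (N y)]
  simp only [Nadd, Nsub]

end AuxGeneric

section AuxProd

variable {K : Type*} [Field K] {g V : Type*} [AddCommGroup g] [Module K g]
  [AddCommGroup V] [Module K V]

/-- Auxiliary: the semidirect-product bracket on `g × V`. -/
def bbFun (br : g →ₗ[K] g →ₗ[K] g) (l : g →ₗ[K] V →ₗ[K] V)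
    (r : V →ₗ[K] g →ₗ[K] V) (p q : g × V) : g × V :=
  (br p.1 q.1, l p.1 q.2 + r p.2 q.1)

/-- Auxiliary: the product Nijenhuis operator on `g × V`. -/
def nnFun (N : g →ₗ[K] g) (Nv : V →ₗ[K] V) (p : g × V) : g × V :=
  (N p.1, Nv p.2)

end AuxProd

/-- If `(V, l, r, N_V)` is a representation of a Nijenhuis Leibniz algebra `(g, N)`,
then `(V, l', r', N_V)` is a representation of the Nijenhuis Leibniz algebra
`(g, [·,·]_*, N)`. -/
theorem star_representation {K : Type*} [Field K] [CharZero K]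
    {g V : Type*} [AddCommGroup g] [Module K g] [AddCommGroup V] [Module K V]
    (br : g →ₗ[K] g →ₗ[K] g)
    (leibniz : ∀ x y z : g, br x (br y z) = br (br x y) z + br y (br x z))
    (N : g →ₗ[K] g)
    (nijenhuis : ∀ x y : g,
      br (N x) (N y) = N (br (N x) y + br x (N y) - N (br x y)))
    (l : g →ₗ[K] V →ₗ[K] V) (r : V →ₗ[K] g →ₗ[K] V) (Nv : V →ₗ[K] V)
    (rep₁ : ∀ (x y : g) (u : V), l x (l y u) = l (br x y) u + l y (l x u))
    (rep₂ : ∀ (x y : g) (u : V), l x (r u y) = r (l x u) y + r u (br x y))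
    (rep₃ : ∀ (x y : g) (u : V), r u (br x y) = r (r u x) y + l x (r u y))
    (nrep₁ : ∀ (x : g) (u : V),
      l (N x) (Nv u) = Nv (l (N x) u + l x (Nv u) - Nv (l x u)))
    (nrep₂ : ∀ (x : g) (u : V),
      r (Nv u) (N x) = Nv (r (Nv u) x + r u (N x) - Nv (r u x))) :
    (∀ (x y : g) (u : V),
      lStar l N Nv x (lStar l N Nv y u) =
        lStar l N Nv (starBracket br N x y) u + lStar l N Nv y (lStar l N Nv x u)) ∧
    (∀ (x y : g) (u : V),
      lStar l N Nv x (rStar r N Nv u y) =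
        rStar r N Nv (lStar l N Nv x u) y + rStar r N Nv u (starBracket br N x y)) ∧
    (∀ (x y : g) (u : V),
      rStar r N Nv u (starBracket br N x y) =
        rStar r N Nv (rStar r N Nv u x) y + lStar l N Nv x (rStar r N Nv u y)) ∧
    (∀ (x : g) (u : V),
      lStar l N Nv (N x) (Nv u) =
        Nv (lStar l N Nv (N x) u + lStar l N Nv x (Nv u) - Nv (lStar l N Nv x u))) ∧
    (∀ (x : g) (u : V),
      rStar r N Nv (Nv u) (N x) =
        Nv (rStar r N Nv (Nv u) x + rStar r N Nv u (N x) - Nv (rStar r N Nv u x))) := by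
  set B : g × V → g × V → g × V := bbFun br l r with hB
  set Np : g × V → g × V := nnFun N Nv with hNp
  have addl : ∀ a b c, B (a + b) c = B a c + B b c := by
    intro a b c
    simp only [hB, bbFun, Prod.fst_add, Prod.snd_add, map_add, LinearMap.add_apply,
      Prod.mk_add_mk, Prod.mk.injEq]
    exact ⟨trivial, by abel⟩
  have addr : ∀ a b c, B a (b + c) = B a b + B a c := by
    intro a b c
    simp only [hB, bbFun, Prod.fst_add, Prod.snd_add, map_add, LinearMap.add_apply,
      Prod.mk_add_mk, Prod.mk.injEq]
    exact ⟨trivial, by abel⟩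
  have subl : ∀ a b c, B (a - b) c = B a c - B b c := by
    intro a b c
    simp only [hB, bbFun, Prod.fst_sub, Prod.snd_sub, map_sub, LinearMap.sub_apply,
      Prod.mk_sub_mk, Prod.mk.injEq]
    exact ⟨trivial, by abel⟩
  have subr : ∀ a b c, B a (b - c) = B a b - B a c := by
    intro a b c
    simp only [hB, bbFun, Prod.fst_sub, Prod.snd_sub, map_sub, LinearMap.sub_apply,
      Prod.mk_sub_mk, Prod.mk.injEq]
    exact ⟨trivial, by abel⟩
  have Nadd : ∀ a b, Np (a + b) = Np a + Np b := by
    intro a b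
    simp [hNp, nnFun, Prod.fst_add, Prod.snd_add, map_add, Prod.mk_add_mk]
  have Nsub : ∀ a b, Np (a - b) = Np a - Np b := by
    intro a b
    simp [hNp, nnFun, Prod.fst_sub, Prod.snd_sub, map_sub, Prod.mk_sub_mk]
  have hleib : ∀ p q s, B p (B q s) = B (B p q) s + B q (B p s) := by
    intro p q s
    simp only [hB, bbFun, map_add, LinearMap.add_apply, Prod.mk_add_mk, Prod.mk.injEq]
    refine ⟨leibniz _ _ _, ?_⟩
    rw [rep₁ p.1 q.1 s.2, rep₂ p.1 s.1 q.2, rep₃ q.1 s.1 p.2]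
    abel
  have hnij : ∀ p q, B (Np p) (Np q) = Np (B (Np p) q + B p (Np q) - Np (B p q)) := by
    intro p q
    simp only [hB, hNp, bbFun, nnFun, Prod.fst_add, Prod.snd_add, Prod.fst_sub,
      Prod.snd_sub, map_add, map_sub, Prod.mk.injEq]
    refine ⟨?_, ?_⟩
    · rw [nijenhuis p.1 q.1]
      simp only [map_add, map_sub]
    · rw [nrep₁ p.1 q.2, nrep₂ q.1 p.2]
      simp only [map_add, map_sub]
      abel
  have hsl : ∀ (x : g) (u : V), sBf B Np (x, 0) (0, u) = (0, lStar l N Nv x u) := by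
    intro x u
    simp only [sBf, hB, hNp, bbFun, nnFun, lStar, map_zero, LinearMap.zero_apply,
      zero_add, add_zero, sub_zero, zero_sub, neg_zero, map_neg,
      Prod.mk_add_mk, Prod.mk_sub_mk, Prod.mk.injEq]
    exact ⟨trivial, by abel⟩
  have hsr : ∀ (u : V) (x : g), sBf B Np (0, u) (x, 0) = (0, rStar r N Nv u x) := by
    intro u x
    simp only [sBf, hB, hNp, bbFun, nnFun, rStar, map_zero, LinearMap.zero_apply,
      zero_add, add_zero, sub_zero, zero_sub, neg_zero, map_neg,
      Prod.mk_add_mk, Prod.mk_sub_mk, Prod.mk.injEq]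
    exact ⟨trivial, by abel⟩
  have hsb : ∀ (x y : g), sBf B Np (x, 0) (y, 0) = (starBracket br N x y, 0) := by
    intro x y
    simp only [sBf, hB, hNp, bbFun, nnFun, starBracket, map_zero, LinearMap.zero_apply,
      zero_add, add_zero, sub_zero, zero_sub, neg_zero, map_neg,
      Prod.mk_add_mk, Prod.mk_sub_mk, Prod.mk.injEq]
  have hNg : ∀ x : g, Np (x, (0 : V)) = (N x, 0) := by
    intro x; simp [hNp, nnFun]
  have hNv : ∀ u : V, Np ((0 : g), u) = (0, Nv u) := by
    intro u; simp [hNp, nnFun]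
  refine ⟨?_, ?_, ?_, ?_, ?_⟩
  · intro x y u
    have h := lemA B Np addl addr subl subr Nadd Nsub hleib hnij (x, 0) (y, 0) (0, u)
    simp only [hsl, hsr, hsb] at h
    simpa using congrArg Prod.snd h
  · intro x y u
    have h := lemA B Np addl addr subl subr Nadd Nsub hleib hnij (x, 0) (0, u) (y, 0)
    simp only [hsl, hsr, hsb] at h
    simpa using congrArg Prod.snd h
  · intro x y u
    have h := lemA B Np addl addr subl subr Nadd Nsub hleib hnij (0, u) (x, 0) (y, 0)
    simp only [hsl, hsr, hsb] at h
    simpa using congrArg Prod.snd h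
  · intro x u
    have h := lemB B Np Nadd Nsub hnij (x, 0) (0, u)
    simp only [hNg, hNv, hsl, hsr, Prod.mk_add_mk, Prod.mk_sub_mk, add_zero,
      sub_zero, zero_add, zero_sub, neg_zero] at h
    simpa using congrArg Prod.snd h
  · intro x u
    have h := lemB B Np Nadd Nsub hnij (0, u) (x, 0)
    simp only [hNg, hNv, hsl, hsr, Prod.mk_add_mk, Prod.mk_sub_mk, add_zero,
      sub_zero, zero_add, zero_sub, neg_zero] at h
    simpa using congrArg Prod.snd h
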